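/- For real numbers x (the unique solution of f(i) = 1 where f(i) = a·4^{-i} + b·2^{-i} with a, b ≥ 0, a + b > 0) and any integer i ≥ 0: if i ≤ x then 1 ≤ 2^{-|i−x|}·f(i), and if i ≥ x then f(i)² ≤ 2^{-|i−x|}·f(i). Consequently min{1, f(i)²} ≤ 2^{-|i−x|}·f(i) for all i. -/

import Mathlib

/-- Dyadic truncation trick: let `f(t) = a·4^{-t} + b·2^{-t}` with `a, b ≥ 0`,
`a + b > 0`, and let `x` be the (unique) real solution of `f(x) = 1`. Then for every
integer `i ≥ 0`: if `i ≤ x` then `1 ≤ 2^{-|i-x|}·f(i)`; if `i ≥ x` then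
`f(i)² ≤ 2^{-|i-x|}·f(i)`; consequently `min{1, f(i)²} ≤ 2^{-|i-x|}·f(i)`. -/
theorem stmt18 (a b x : ℝ) (ha : 0 ≤ a) (hb : 0 ≤ b) (hab : 0 < a + b)
    (f : ℝ → ℝ) (hf : ∀ t : ℝ, f t = a * (4 : ℝ) ^ (-t) + b * (2 : ℝ) ^ (-t))
    (hx : f x = 1) :
    ∀ i : ℕ,
      ((i : ℝ) ≤ x → 1 ≤ (2 : ℝ) ^ (-|(i : ℝ) - x|) * f i) ∧
      (x ≤ (i : ℝ) → f i ^ 2 ≤ (2 : ℝ) ^ (-|(i : ℝ) - x|) * f i) ∧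
      min 1 (f i ^ 2) ≤ (2 : ℝ) ^ (-|(i : ℝ) - x|) * f i := by
  have h2 : (0:ℝ) < 2 := by norm_num
  have h4 : ∀ t : ℝ, (4:ℝ) ^ (-t) = ((2:ℝ) ^ (-t))^2 := by
    intro t
    rw [show (4:ℝ) = 2*2 by norm_num, Real.mul_rpow h2.le h2.le, sq]
  intro i
  set u : ℝ := (2:ℝ) ^ (-(i:ℝ)) with hu
  set v : ℝ := (2:ℝ) ^ (-x) with hv
  have hu0 : 0 < u := Real.rpow_pos_of_pos h2 _
  have hv0 : 0 < v := Real.rpow_pos_of_pos h2 _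
  have hfi : f i = a * u^2 + b * u := by rw [hf, h4]
  have hfx : a * v^2 + b * v = 1 := by rw [← hx, hf, h4]
  have hub : 0 < a * u + b := by
    rcases hb.eq_or_lt with hb0 | hb0
    · have haa : 0 < a := by rw [← hb0] at hab; simpa using hab
      nlinarith [mul_pos haa hu0]
    · nlinarith [mul_nonneg ha hu0.le]
  have hvb : 0 < a * v + b := by
    rcases hb.eq_or_lt with hb0 | hb0
    · have haa : 0 < a := by rw [← hb0] at hab; simpa using hab
      nlinarith [mul_pos haa hv0]
    · nlinarith [mul_nonneg ha hv0.le]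
  have hfi0 : 0 < f i := by rw [hfi]; nlinarith [mul_pos hu0 hub]
  have hcase1 : (i:ℝ) ≤ x → 1 ≤ (2 : ℝ) ^ (-|(i : ℝ) - x|) * f i := by
    intro hix
    have habs : -|(i : ℝ) - x| = (i:ℝ) - x := by
      rw [abs_of_nonpos (by linarith)]; ring
    have hpow : (2 : ℝ) ^ (-|(i : ℝ) - x|) = u⁻¹ * v := by
      rw [habs, show (i:ℝ) - x = (-(-(i:ℝ))) + (-x) by ring,
        Real.rpow_add h2, Real.rpow_neg h2.le]
    have hvu : v ≤ u := by
      apply Real.rpow_le_rpow_of_exponent_le (by norm_num)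
      linarith
    rw [hpow, hfi]
    have : u⁻¹ * v * (a * u ^ 2 + b * u) = v * (a*u+b) := by
      field_simp
    rw [this]
    nlinarith [mul_nonneg ha (sub_nonneg.2 hvu), mul_pos hv0 hvb]
  have hcase2 : x ≤ (i:ℝ) → f i ^ 2 ≤ (2 : ℝ) ^ (-|(i : ℝ) - x|) * f i := by
    intro hix
    have habs : -|(i : ℝ) - x| = x - (i:ℝ) := by
      rw [abs_of_nonneg (by linarith)]; ring
    have hvinv : (2:ℝ) ^ x = v⁻¹ := by rw [hv, Real.rpow_neg h2.le, inv_inv]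
    have hpow : (2 : ℝ) ^ (-|(i : ℝ) - x|) = u * v⁻¹ := by
      rw [habs, show x - (i:ℝ) = (-(i:ℝ)) + x by ring, Real.rpow_add h2, hvinv]
    have huv : u ≤ v := by
      apply Real.rpow_le_rpow_of_exponent_le (by norm_num)
      linarith
    rw [hpow]
    have hux : a*u*v^2 + b*(u*v) = u := by
      calc a*u*v^2 + b*(u*v) = u*(a*v^2+b*v) := by ring
        _ = u*1 := by rw [hfx]
        _ = u := mul_one u
    have hkeyv : f i * v ≤ u := by
      rw [hfi]
      nlinarith [mul_nonneg (mul_nonneg (mul_nonneg ha hu0.le) hv0.le)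
        (sub_nonneg.2 huv)]
    have hkey : f i ≤ u * v⁻¹ := by
      rw [← div_eq_mul_inv, le_div_iff₀ hv0]; exact hkeyv
    nlinarith [hfi0, hkey]
  refine ⟨hcase1, hcase2, ?_⟩
  rcases le_total ((i:ℝ)) x with h | h
  · exact le_trans (min_le_left _ _) (hcase1 h)
  · exact le_trans (min_le_right _ _) (hcase2 h)
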